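/- Under hypotheses (H1) and (H3), for a = a(1,0), the function z ↦ E_z(|S₂(τ)| exp(a·S(τ)); τ = τ₁ < τ₂) is finite at every z ∈ ℕ*×ℕ*. -/

import Mathlib

open scoped ENNReal Classical
open Filter

namespace KRWQ

/-- `n`-step transition probabilities of the homogeneous random walk with step
distribution `μ` on an abelian group `G`: `nstep μ n z z' = P_z(S(n) = z')`. -/
noncomputable def nstep {G : Type*} [AddCommGroup G] (μ : G → ℝ≥0∞) : ℕ → G → G → ℝ≥0∞
  | 0, z, z' => if z' = z then 1 else 0
  | n + 1, z, z' => ∑' w : G, nstep μ n z w * μ (z' - w)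

/-- `n`-step transition probabilities of the random walk killed outside the set `A`:
for `z ∈ A`, `nstepK μ A n z z' = P_z(S(n) = z', S(k) ∈ A for all k ≤ n)`. -/
noncomputable def nstepK {G : Type*} [AddCommGroup G] (μ : G → ℝ≥0∞) (A : Set G) :
    ℕ → G → G → ℝ≥0∞
  | 0, z, z' => if z' = z then 1 else 0
  | n + 1, z, z' => A.indicator (fun u => ∑' w : G, nstepK μ A n z w * μ (u - w)) z'

/-- Green function of the homogeneous random walk. -/
noncomputable def green {G : Type*} [AddCommGroup G] (μ : G → ℝ≥0∞) (z z' : G) : ℝ≥0∞ :=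
  ∑' n : ℕ, nstep μ n z z'

/-- Green function of the random walk killed outside `A`. -/
noncomputable def greenK {G : Type*} [AddCommGroup G] (μ : G → ℝ≥0∞) (A : Set G)
    (z z' : G) : ℝ≥0∞ :=
  ∑' n : ℕ, nstepK μ A n z z'

/-- Distribution of the exit position: for `z ∈ A`, `exitK μ A z w` is the probability
that the walk started at `z` first exits `A` (in finite time) at the point `w`,
i.e. `P_z(τ < ∞, S(τ) = w)` where `τ = inf{n ≥ 0 : S(n) ∉ A}`. -/
noncomputable def exitK {G : Type*} [AddCommGroup G] (μ : G → ℝ≥0∞) (A : Set G)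
    (z w : G) : ℝ≥0∞ :=
  Aᶜ.indicator (fun u => ∑' n : ℕ, ∑' v : G, nstepK μ A n z v * μ (u - v)) w

/-- `Eexit μ A z f = E_z(f(S(τ)); τ < ∞)` for a nonnegative `f`,
where `τ` is the first exit time from `A` and `z ∈ A`. -/
noncomputable def Eexit {G : Type*} [AddCommGroup G] (μ : G → ℝ≥0∞) (A : Set G) (z : G)
    (f : G → ℝ≥0∞) : ℝ≥0∞ :=
  ∑' w : G, exitK μ A z w * f w

/-- `EexitR μ A z f = E_z(f(S(τ)); τ < ∞)` for a signed `f` (real-valued version). -/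
noncomputable def EexitR {G : Type*} [AddCommGroup G] (μ : G → ℝ≥0∞) (A : Set G) (z : G)
    (f : G → ℝ) : ℝ :=
  ∑' w : G, (exitK μ A z w).toReal * f w

/-- Euclidean scalar product on `ℝ²`. -/
def dot (a b : ℝ × ℝ) : ℝ := a.1 * b.1 + a.2 * b.2

/-- Embedding of the lattice `ℤ²` into `ℝ²`. -/
def toR (z : ℤ × ℤ) : ℝ × ℝ := ((z.1 : ℝ), (z.2 : ℝ))

/-- Euclidean norm on `ℝ²`. -/
noncomputable def norE (p : ℝ × ℝ) : ℝ := Real.sqrt (p.1 ^ 2 + p.2 ^ 2)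

/-- Euclidean norm of a lattice point. -/
noncomputable def normZ (z : ℤ × ℤ) : ℝ := norE (toR z)

/-- The open quadrant `ℕ* × ℕ*`. -/
def quadrant : Set (ℤ × ℤ) := {z | 0 < z.1 ∧ 0 < z.2}

/-- The half plane `ℤ × ℕ*` (state space of the local process `Z¹₊`). -/
def upperHalf : Set (ℤ × ℤ) := {z | 0 < z.2}

/-- The half plane `ℕ* × ℤ` (state space of the local process `Z²₊`). -/
def rightHalf : Set (ℤ × ℤ) := {z | 0 < z.1}

/-- The jump generating function `φ(a) = ∑_z μ(z) exp(a·z)`. -/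
noncomputable def jumpGF (μ : ℤ × ℤ → ℝ≥0∞) (a : ℝ × ℝ) : ℝ≥0∞ :=
  ∑' z : ℤ × ℤ, μ z * ENNReal.ofReal (Real.exp (dot a (toR z)))

/-- Hypothesis (H1): the homogeneous random walk `S` with step distribution `μ`
is irreducible, and its mean `m = ∑_z z μ(z)` exists and is nonzero. -/
def H1 (μ : ℤ × ℤ → ℝ≥0∞) : Prop :=
  (∀ z z' : ℤ × ℤ, ∃ n : ℕ, 0 < nstep μ n z z') ∧
    Summable (fun z : ℤ × ℤ => ((z.1 : ℝ)) * (μ z).toReal) ∧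
    Summable (fun z : ℤ × ℤ => ((z.2 : ℝ)) * (μ z).toReal) ∧
    ((∑' z : ℤ × ℤ, ((z.1 : ℝ)) * (μ z).toReal, ∑' z : ℤ × ℤ, ((z.2 : ℝ)) * (μ z).toReal)
      ≠ ((0 : ℝ), (0 : ℝ)))

/-- Hypothesis (H2): the random walk killed outside the quadrant is irreducible
on the quadrant. -/
def H2 (μ : ℤ × ℤ → ℝ≥0∞) : Prop :=
  ∀ z ∈ quadrant, ∀ z' ∈ quadrant, ∃ n : ℕ, 0 < nstepK μ quadrant n z z'

/-- Hypothesis (H3): the jump generating function is finite everywhere on `ℝ²`. -/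
def H3 (μ : ℤ × ℤ → ℝ≥0∞) : Prop := ∀ a : ℝ × ℝ, jumpGF μ a < ⊤

/-- `d` is a greatest common divisor of the set `K` of natural numbers. -/
def IsGcdOfSet (K : Set ℕ) (d : ℕ) : Prop :=
  (∀ k ∈ K, d ∣ k) ∧ ∀ c : ℕ, (∀ k ∈ K, c ∣ k) → c ∣ d

/-- First marginal of `μ`: step distribution of the coordinate walk `S₁`. -/
noncomputable def marg1 (μ : ℤ × ℤ → ℝ≥0∞) : ℤ → ℝ≥0∞ := fun x => ∑' y : ℤ, μ (x, y)

/-- Second marginal of `μ`: step distribution of the coordinate walk `S₂`. -/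
noncomputable def marg2 (μ : ℤ × ℤ → ℝ≥0∞) : ℤ → ℝ≥0∞ := fun y => ∑' x : ℤ, μ (x, y)

/-- Hypothesis (H4): the coordinate random walks `S₁` and `S₂` are aperiodic on `ℤ`. -/
def H4 (μ : ℤ × ℤ → ℝ≥0∞) : Prop :=
  IsGcdOfSet {k : ℕ | 0 < k ∧ 0 < nstep (marg1 μ) k (0 : ℤ) 0} 1 ∧
    IsGcdOfSet {k : ℕ | 0 < k ∧ 0 < nstep (marg2 μ) k (0 : ℤ) 0} 1

/-- The set `𝒮²₊` of unit vectors of `ℝ²` with nonnegative coordinates. -/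
def Spos : Set (ℝ × ℝ) := {q | 0 ≤ q.1 ∧ 0 ≤ q.2 ∧ norE q = 1}

/-- `aOf` is the map `q ↦ a(q)`, the inverse of the homeomorphism
`a ↦ ∇φ(a)/|∇φ(a)|` from `∂D` onto the unit circle (extended to all nonzero `q` by
homogeneity).  Equivalently, `a(q)` is the unique point of `D = {a : φ(a) ≤ 1}` where
the linear functional `a ↦ a·q` attains its maximum over `D`, and it lies on `∂D`. -/
def IsDirMap (μ : ℤ × ℤ → ℝ≥0∞) (aOf : ℝ × ℝ → ℝ × ℝ) : Prop :=
  ∀ q : ℝ × ℝ, q ≠ 0 →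
    jumpGF μ (aOf q) = 1 ∧
      ∀ a : ℝ × ℝ, jumpGF μ a ≤ 1 → a ≠ aOf q → dot a q < dot (aOf q) q

/-- The arc `Γ₊ = {a ∈ ∂D : q(a) ∈ 𝒮²₊}`. -/
def GammaPlus (aOf : ℝ × ℝ → ℝ × ℝ) : Set (ℝ × ℝ) := {a | ∃ q ∈ Spos, a = aOf q}

/-- The integrand appearing in the boundary term of `h_a`. -/
noncomputable def haIntegrand (aOf : ℝ × ℝ → ℝ × ℝ) (a : ℝ × ℝ) (w : ℤ × ℤ) : ℝ :=
  if a = aOf ((0 : ℝ), (1 : ℝ)) then (w.1 : ℝ) * Real.exp (dot a (toR w))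
  else if a = aOf ((1 : ℝ), (0 : ℝ)) then (w.2 : ℝ) * Real.exp (dot a (toR w))
  else Real.exp (dot a (toR w))

/-- The leading term of `h_a`. -/
noncomputable def haLead (aOf : ℝ × ℝ → ℝ × ℝ) (a : ℝ × ℝ) (z : ℤ × ℤ) : ℝ :=
  if a = aOf ((0 : ℝ), (1 : ℝ)) then (z.1 : ℝ) * Real.exp (dot a (toR z))
  else if a = aOf ((1 : ℝ), (0 : ℝ)) then (z.2 : ℝ) * Real.exp (dot a (toR z))
  else Real.exp (dot a (toR z))

/-- The harmonic function `h_a` of the killed random walk, defined by (1.3). -/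
noncomputable def haFun (μ : ℤ × ℤ → ℝ≥0∞) (aOf : ℝ × ℝ → ℝ × ℝ) (a : ℝ × ℝ)
    (z : ℤ × ℤ) : ℝ :=
  haLead aOf a z - EexitR μ quadrant z (haIntegrand aOf a)

/-- Expectation over the event `{τ = τ₁ < τ₂}`, i.e. the walk exits the quadrant
through the boundary `{w : w₁ ≤ 0, w₂ > 0}`. -/
noncomputable def Eexit1 (μ : ℤ × ℤ → ℝ≥0∞) (z : ℤ × ℤ) (f : ℤ × ℤ → ℝ≥0∞) : ℝ≥0∞ :=
  ∑' w : ℤ × ℤ, (if w.1 ≤ 0 ∧ 0 < w.2 then exitK μ quadrant z w * f w else 0)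

/-- The support function `w ↦ a(w)·w = max_{a ∈ D} a·w`, with the convention that it
vanishes at `w = 0`. -/
noncomputable def support (aOf : ℝ × ℝ → ℝ × ℝ) (w : ℝ × ℝ) : ℝ :=
  if w = 0 then 0 else dot (aOf w) w

/-- The function `λ_ε(q,w) = a(w)·w + a(q-w)·(q-w) - ε|w|`. -/
noncomputable def lamEps (aOf : ℝ × ℝ → ℝ × ℝ) (ε : ℝ) (q w : ℝ × ℝ) : ℝ :=
  support aOf w + support aOf (q - w) - ε * norE w

/-- The principal part `Ξ^q_δ(z,zₙ)` of the renewal equation. -/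
noncomputable def XiQ (μ : ℤ × ℤ → ℝ≥0∞) (q : ℝ × ℝ) (δ : ℝ) (z zn : ℤ × ℤ) : ℝ :=
  if q = ((1 : ℝ), (0 : ℝ)) then
    (greenK μ upperHalf z zn).toReal -
      ∑' w : ℤ × ℤ, (exitK μ quadrant z w).toReal *
        (if w.1 ≤ 0 ∧ 0 < w.2 ∧ normZ w < δ * normZ zn then
          (greenK μ upperHalf w zn).toReal else 0)
  else if q = ((0 : ℝ), (1 : ℝ)) then
    (greenK μ rightHalf z zn).toReal -
      ∑' w : ℤ × ℤ, (exitK μ quadrant z w).toReal *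
        (if w.2 ≤ 0 ∧ 0 < w.1 ∧ normZ w < δ * normZ zn then
          (greenK μ rightHalf w zn).toReal else 0)
  else
    (green μ z zn).toReal -
      ∑' w : ℤ × ℤ, (exitK μ quadrant z w).toReal *
        (if normZ w < δ * normZ zn then (green μ w zn).toReal else 0)



section Aux

lemma key_exp (s : ℝ) : Real.exp s ≤ 1 + s + s^2 * Real.exp |s| := by
  rcases le_or_gt s 0 with hs | hs
  · have h1 : (0:ℝ) < 1 - s := by linarith
    have h2 : 1 - s ≤ Real.exp (-s) := by have := Real.add_one_le_exp (-s); linarith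
    have h3 : Real.exp s * (1 - s) ≤ 1 := by
      calc Real.exp s * (1 - s) ≤ Real.exp s * Real.exp (-s) := by
            exact mul_le_mul_of_nonneg_left h2 (Real.exp_pos s).le
        _ = 1 := by rw [← Real.exp_add]; simp
    have h4 : Real.exp s ≤ 1 + s + s^2 := by nlinarith [sq_nonneg s, Real.exp_pos s]
    have h5 : (1:ℝ) ≤ Real.exp |s| := Real.one_le_exp (abs_nonneg s)
    nlinarith [sq_nonneg s]
  · have he : Real.exp s - 1 ≤ s * Real.exp s := by
      have h2 : 1 - s ≤ Real.exp (-s) := by have := Real.add_one_le_exp (-s); linarith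
      have := mul_le_mul_of_nonneg_left h2 (Real.exp_pos s).le
      rw [← Real.exp_add] at this; simp at this; nlinarith [Real.exp_pos s]
    have h6 : Real.exp s - 1 - s ≤ s^2 * Real.exp s := by nlinarith [Real.exp_pos s, hs.le]
    rw [abs_of_pos hs]; linarith

lemma abs_le_exps (x : ℝ) : |x| ≤ Real.exp x + Real.exp (-x) := by
  have h1 : |x| ≤ Real.exp |x| := (Real.add_one_le_exp |x|).trans' (by linarith [abs_nonneg x])
  rcases abs_cases x with ⟨h, _⟩ | ⟨h, _⟩
  · rw [h] at h1; nlinarith [Real.exp_pos (-x), h1]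
  · rw [h] at h1; nlinarith [Real.exp_pos x, h1]

lemma mul_exp_neg_le (ε x : ℝ) (hε : 0 < ε) (hx : 0 ≤ x) : x * Real.exp (-(ε*x)) ≤ 1/ε := by
  have h : ε * x ≤ Real.exp (ε * x) := by have := Real.add_one_le_exp (ε*x); nlinarith
  have h2 : ε * (x * Real.exp (-(ε*x))) ≤ 1 := by
    have := mul_le_mul_of_nonneg_right h (Real.exp_pos (-(ε*x))).le
    rw [← Real.exp_add] at this; simp at this; nlinarith
  rw [div_eq_inv_mul, le_inv_mul_iff₀ hε] at *
  · linarith [h2]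

variable {μ : ℤ × ℤ → ℝ≥0∞}

lemma mu_ne_top (hprob : ∑' z : ℤ × ℤ, μ z = 1) (z : ℤ × ℤ) : μ z ≠ ⊤ := by
  have h := ENNReal.le_tsum (f := μ) z
  rw [hprob] at h
  exact (h.trans_lt ENNReal.one_lt_top).ne

lemma jump_term_eq (hprob : ∑' z : ℤ × ℤ, μ z = 1) (c : ℝ × ℝ) (z : ℤ × ℤ) :
    μ z * ENNReal.ofReal (Real.exp (dot c (toR z)))
      = ENNReal.ofReal ((μ z).toReal * Real.exp (dot c (toR z))) := by
  rw [ENNReal.ofReal_mul ENNReal.toReal_nonneg, ENNReal.ofReal_toReal (mu_ne_top hprob z)]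

noncomputable def phiR (μ : ℤ × ℤ → ℝ≥0∞) (c : ℝ × ℝ) : ℝ :=
  ∑' z : ℤ × ℤ, (μ z).toReal * Real.exp (dot c (toR z))

lemma summable_phiR (hprob : ∑' z : ℤ × ℤ, μ z = 1) (h3 : H3 μ) (c : ℝ × ℝ) :
    Summable (fun z : ℤ × ℤ => (μ z).toReal * Real.exp (dot c (toR z))) := by
  have h := ENNReal.summable_toReal (h3 c).ne
  refine h.congr fun z => ?_
  rw [ENNReal.toReal_mul, ENNReal.toReal_ofReal (Real.exp_nonneg _)]

lemma jumpGF_eq_ofReal (hprob : ∑' z : ℤ × ℤ, μ z = 1) (h3 : H3 μ) (c : ℝ × ℝ) :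
    jumpGF μ c = ENNReal.ofReal (phiR μ c) := by
  rw [phiR, ENNReal.ofReal_tsum_of_nonneg
    (fun z => mul_nonneg ENNReal.toReal_nonneg (Real.exp_nonneg _)) (summable_phiR hprob h3 c)]
  exact tsum_congr (jump_term_eq hprob c)

lemma phiR_nonneg (c : ℝ × ℝ) : 0 ≤ phiR μ c :=
  tsum_nonneg fun z => mul_nonneg ENNReal.toReal_nonneg (Real.exp_nonneg _)

lemma summable_dominated (hprob : ∑' z : ℤ × ℤ, μ z = 1) (h3 : H3 μ) (F : ℤ × ℤ → ℝ)
    (c₁ c₂ : ℝ × ℝ)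
    (hF : ∀ z, |F z| ≤ Real.exp (dot c₁ (toR z)) + Real.exp (dot c₂ (toR z))) :
    Summable (fun z : ℤ × ℤ => (μ z).toReal * F z) := by
  apply Summable.of_abs
  refine Summable.of_nonneg_of_le (fun z => abs_nonneg _) (fun z => ?_)
    ((summable_phiR hprob h3 c₁).add (summable_phiR hprob h3 c₂))
  rw [abs_mul, abs_of_nonneg (ENNReal.toReal_nonneg (a := μ z)), ← mul_add]
  exact mul_le_mul_of_nonneg_left (hF z) ENNReal.toReal_nonneg

lemma dot_add_right (c d : ℝ × ℝ) (w : ℝ × ℝ) : dot (c + d) w = dot c w + dot d w := by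
  simp [dot]; ring

lemma dot_smul_right (t : ℝ) (d : ℝ × ℝ) (w : ℝ × ℝ) : dot (t • d) w = t * dot d w := by
  simp [dot]; ring

lemma dot_toR_add (c : ℝ × ℝ) (z w : ℤ × ℤ) :
    dot c (toR (z + w)) = dot c (toR z) + dot c (toR w) := by
  simp [dot, toR]; push_cast; ring


/-- directional "derivative" numerator -/
noncomputable def Gdir (μ : ℤ × ℤ → ℝ≥0∞) (c d : ℝ × ℝ) : ℝ :=
  ∑' z : ℤ × ℤ, (μ z).toReal * (dot d (toR z) * Real.exp (dot c (toR z)))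

noncomputable def Kdir (μ : ℤ × ℤ → ℝ≥0∞) (c d : ℝ × ℝ) : ℝ :=
  ∑' z : ℤ × ℤ, (μ z).toReal *
    ((dot d (toR z))^2 * Real.exp |dot d (toR z)| * Real.exp (dot c (toR z)))

lemma Gdir_term_bound (c d : ℝ × ℝ) (z : ℤ × ℤ) :
    |dot d (toR z) * Real.exp (dot c (toR z))|
      ≤ Real.exp (dot (c + d) (toR z)) + Real.exp (dot (c - d) (toR z)) := by
  have h := abs_le_exps (dot d (toR z))
  have he := Real.exp_pos (dot c (toR z))
  rw [abs_mul, abs_of_pos he]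
  calc |dot d (toR z)| * Real.exp (dot c (toR z))
      ≤ (Real.exp (dot d (toR z)) + Real.exp (-dot d (toR z))) * Real.exp (dot c (toR z)) :=
        mul_le_mul_of_nonneg_right h he.le
    _ = Real.exp (dot (c + d) (toR z)) + Real.exp (dot (c - d) (toR z)) := by
        have h1 : dot (c + d) (toR z) = dot c (toR z) + dot d (toR z) := dot_add_right ..
        have h2 : dot (c - d) (toR z) = dot c (toR z) + (- dot d (toR z)) := by
          have := dot_add_right c (-d) (toR z)
          have h3 : dot (-d) (toR z) = -dot d (toR z) := by simp [dot]; ring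
          simpa [sub_eq_add_neg, h3] using this
        rw [h1, h2, Real.exp_add, Real.exp_add]; ring

lemma summable_Gdir (hprob : ∑' z : ℤ × ℤ, μ z = 1) (h3 : H3 μ) (c d : ℝ × ℝ) :
    Summable (fun z : ℤ × ℤ =>
      (μ z).toReal * (dot d (toR z) * Real.exp (dot c (toR z)))) :=
  summable_dominated hprob h3 _ (c + d) (c - d) (Gdir_term_bound c d)

lemma Kdir_term_bound (c d : ℝ × ℝ) (z : ℤ × ℤ) :
    |(dot d (toR z))^2 * Real.exp |dot d (toR z)| * Real.exp (dot c (toR z))|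
      ≤ Real.exp (dot (c + (3:ℝ) • d) (toR z)) + Real.exp (dot (c - (3:ℝ) • d) (toR z)) := by
  set y := dot d (toR z) with hy
  have hyy : |y| ≤ Real.exp |y| := (Real.add_one_le_exp |y|).trans' (by linarith [abs_nonneg y])
  have hsq : y^2 ≤ Real.exp |y| * Real.exp |y| := by
    have : |y| * |y| ≤ Real.exp |y| * Real.exp |y| :=
      mul_le_mul hyy hyy (abs_nonneg y) (Real.exp_pos _).le
    nlinarith [abs_nonneg y, sq_abs y]
  have h1 : (dot d (toR z))^2 * Real.exp |dot d (toR z)| * Real.exp (dot c (toR z))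
      ≤ Real.exp (3 * |y| + dot c (toR z)) := by
    rw [Real.exp_add]
    have h3e : Real.exp (3 * |y|) = Real.exp |y| * Real.exp |y| * Real.exp |y| := by
      rw [← Real.exp_add, ← Real.exp_add]; ring_nf
    rw [h3e]
    have hstep : y^2 * Real.exp |y| ≤ Real.exp |y| * Real.exp |y| * Real.exp |y| :=
      mul_le_mul_of_nonneg_right hsq (Real.exp_pos _).le
    exact mul_le_mul_of_nonneg_right hstep (Real.exp_pos _).le
  have hnn : 0 ≤ (dot d (toR z))^2 * Real.exp |dot d (toR z)| * Real.exp (dot c (toR z)) := by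
    positivity
  rw [abs_of_nonneg hnn]
  refine h1.trans ?_
  have h3y : 3 * |y| = |3 * y| := by rw [abs_mul]; simp [abs_of_nonneg]
  rcases abs_cases (3 * y) with ⟨h, _⟩ | ⟨h, _⟩
  · rw [h3y, h]
    have : dot (c + (3:ℝ) • d) (toR z) = 3 * y + dot c (toR z) := by
      rw [dot_add_right, dot_smul_right, hy]; ring
    rw [this]
    linarith [Real.exp_pos (dot (c - (3:ℝ) • d) (toR z))]
  · rw [h3y, h]
    have : dot (c - (3:ℝ) • d) (toR z) = -(3 * y) + dot c (toR z) := by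
      have h3 : dot (-((3:ℝ) • d)) (toR z) = -(3 * dot d (toR z)) := by
        rw [show -((3:ℝ) • d) = (-3:ℝ) • d by module, dot_smul_right]; ring
      have := dot_add_right c (-((3:ℝ) • d)) (toR z)
      rw [sub_eq_add_neg]
      rw [this, h3, hy]; ring
    rw [this]
    linarith [Real.exp_pos (dot (c + (3:ℝ) • d) (toR z))]

lemma summable_Kdir (hprob : ∑' z : ℤ × ℤ, μ z = 1) (h3 : H3 μ) (c d : ℝ × ℝ) :
    Summable (fun z : ℤ × ℤ => (μ z).toReal *
      ((dot d (toR z))^2 * Real.exp |dot d (toR z)| * Real.exp (dot c (toR z)))) :=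
  summable_dominated hprob h3 _ _ _ (Kdir_term_bound c d)

lemma Kdir_nonneg (c d : ℝ × ℝ) : 0 ≤ Kdir μ c d :=
  tsum_nonneg fun z => by positivity

lemma phiR_lower (hprob : ∑' z : ℤ × ℤ, μ z = 1) (h3 : H3 μ) (c d : ℝ × ℝ) :
    phiR μ c + Gdir μ c d ≤ phiR μ (c + d) := by
  rw [phiR, Gdir, ← Summable.tsum_add (summable_phiR hprob h3 c) (summable_Gdir hprob h3 c d)]
  refine Summable.tsum_le_tsum (fun z => ?_) ((summable_phiR hprob h3 c).add
    (summable_Gdir hprob h3 c d)) (summable_phiR hprob h3 (c + d))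
  rw [dot_add_right, Real.exp_add, ← mul_add]
  refine mul_le_mul_of_nonneg_left ?_ ENNReal.toReal_nonneg
  have h := Real.add_one_le_exp (dot d (toR z))
  have he := Real.exp_pos (dot c (toR z))
  nlinarith

lemma phiR_upper (hprob : ∑' z : ℤ × ℤ, μ z = 1) (h3 : H3 μ) (c d : ℝ × ℝ)
    (t : ℝ) (ht0 : 0 ≤ t) (ht1 : t ≤ 1) :
    phiR μ (c + t • d) ≤ phiR μ c + t * Gdir μ c d + t^2 * Kdir μ c d := by
  have sG := (summable_Gdir hprob h3 c d).mul_left t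
  have sK := (summable_Kdir hprob h3 c d).mul_left (t^2)
  have sP := summable_phiR hprob h3 c
  simp only [phiR, Gdir, Kdir]
  rw [← tsum_mul_left, ← tsum_mul_left, ← Summable.tsum_add sP sG, ← Summable.tsum_add (sP.add sG) sK]
  refine Summable.tsum_le_tsum (fun z => ?_) (summable_phiR hprob h3 (c + t • d))
    ((sP.add sG).add sK)
  rw [dot_add_right, dot_smul_right, Real.exp_add]
  set x := dot c (toR z)
  set y := dot d (toR z)
  have hkey := key_exp (t * y)
  have hex := Real.exp_pos x
  have h2 : (t*y)^2 * Real.exp |t*y| ≤ t^2 * (y^2 * Real.exp |y|) := by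
    have habs : |t*y| ≤ |y| := by
      rw [abs_mul]
      calc |t| * |y| ≤ 1 * |y| :=
        mul_le_mul_of_nonneg_right (by rwa [abs_of_nonneg ht0]) (abs_nonneg y)
      _ = |y| := one_mul _
    have := Real.exp_le_exp.mpr habs
    have h4 : (t*y)^2 = t^2 * y^2 := by ring
    nlinarith [sq_nonneg (t*y), Real.exp_pos |t*y|, sq_nonneg y, sq_nonneg t]
  have hmain : Real.exp (t * y) ≤ 1 + t * y + t^2 * (y^2 * Real.exp |y|) := by
    calc Real.exp (t*y) ≤ 1 + t*y + (t*y)^2 * Real.exp |t*y| := hkey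
      _ ≤ 1 + t*y + t^2 * (y^2 * Real.exp |y|) := by linarith
  have hμ : (0:ℝ) ≤ (μ z).toReal := ENNReal.toReal_nonneg
  calc (μ z).toReal * (Real.exp x * Real.exp (t * y))
      ≤ (μ z).toReal * (Real.exp x * (1 + t * y + t^2 * (y^2 * Real.exp |y|))) := by
        refine mul_le_mul_of_nonneg_left ?_ hμ
        exact mul_le_mul_of_nonneg_left hmain hex.le
    _ = (μ z).toReal * Real.exp x + t * ((μ z).toReal * (y * Real.exp x))
        + t^2 * ((μ z).toReal * (y^2 * Real.exp |y| * Real.exp x)) := by ring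

lemma descend (hprob : ∑' z : ℤ × ℤ, μ z = 1) (h3 : H3 μ) (c d : ℝ × ℝ)
    (hc : phiR μ c ≤ 1) (hG : Gdir μ c d < 0) :
    ∃ t : ℝ, 0 < t ∧ t ≤ 1 ∧ phiR μ (c + t • d) < 1 := by
  set K := Kdir μ c d with hK
  have hK0 : 0 ≤ K := Kdir_nonneg c d
  set G := Gdir μ c d with hGdef
  set t := min 1 (-G / (2 * (K + 1))) with ht
  have hGn : 0 < -G := neg_pos.mpr hG
  have hpos : 0 < -G / (2 * (K + 1)) := div_pos hGn (by positivity)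
  have ht0 : 0 < t := lt_min one_pos hpos
  have ht1 : t ≤ 1 := min_le_left _ _
  refine ⟨t, ht0, ht1, ?_⟩
  have hup := phiR_upper hprob h3 c d t ht0.le ht1
  have htK : t * K ≤ -G / 2 := by
    have h1 : t ≤ -G / (2 * (K + 1)) := min_le_right _ _
    have h2 : t * K ≤ (-G / (2 * (K + 1))) * K :=
      mul_le_mul_of_nonneg_right h1 hK0
    calc t * K ≤ (-G / (2 * (K + 1))) * K := h2
      _ ≤ -G / 2 := by
        rw [div_mul_eq_mul_div, div_le_div_iff₀ (by positivity) (by norm_num)]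
        nlinarith [hK0, hG]
  have : t * G + t^2 * K < 0 := by
    have h5 : t^2 * K = t * (t * K) := by ring
    have h6 : t * (t*K) ≤ t * (-G/2) := mul_le_mul_of_nonneg_left htK ht0.le
    have : t * G + t * (-G/2) = t * (G/2) := by ring
    nlinarith [ht0]
  linarith [hup, hc]


lemma phiR_zero (hprob : ∑' z : ℤ × ℤ, μ z = 1) : phiR μ 0 = 1 := by
  have h : ∀ z : ℤ × ℤ, (μ z).toReal * Real.exp (dot 0 (toR z)) = (μ z).toReal := by
    intro z; simp [dot]
  rw [phiR]
  rw [tsum_congr h, ← ENNReal.tsum_toReal_eq (mu_ne_top hprob), hprob]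
  simp

lemma Gdir_decomp (hprob : ∑' z : ℤ × ℤ, μ z = 1) (h3 : H3 μ) (c d : ℝ × ℝ) :
    Gdir μ c d = d.1 * Gdir μ c (1, 0) + d.2 * Gdir μ c (0, 1) := by
  have s1 := (summable_Gdir hprob h3 c (1, 0)).mul_left d.1
  have s2 := (summable_Gdir hprob h3 c (0, 1)).mul_left d.2
  rw [Gdir, Gdir, Gdir, ← tsum_mul_left, ← tsum_mul_left, ← Summable.tsum_add s1 s2]
  refine tsum_congr fun z => ?_
  simp only [dot, toR]
  ring

lemma Gdir_zero_mean (h1 : H1 μ) :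
    ∃ d : ℝ × ℝ, Gdir μ 0 d < 0 := by
  obtain ⟨-, s1, s2, hm⟩ := h1
  set m1 := ∑' z : ℤ × ℤ, ((z.1 : ℝ)) * (μ z).toReal with hm1
  set m2 := ∑' z : ℤ × ℤ, ((z.2 : ℝ)) * (μ z).toReal with hm2
  refine ⟨(-m1, -m2), ?_⟩
  have hcalc : Gdir μ 0 (-m1, -m2) = -m1 * m1 + -m2 * m2 := by
    rw [Gdir]
    have h : ∀ z : ℤ × ℤ, (μ z).toReal * (dot (-m1, -m2) (toR z) * Real.exp (dot 0 (toR z)))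
        = -m1 * ((z.1 : ℝ) * (μ z).toReal) + -m2 * ((z.2 : ℝ) * (μ z).toReal) := by
      intro z; simp [dot, toR]; ring
    rw [tsum_congr h, Summable.tsum_add (s1.mul_left _) (s2.mul_left _), tsum_mul_left, tsum_mul_left,
      ← hm1, ← hm2]
  rw [hcalc]
  have : m1 ≠ 0 ∨ m2 ≠ 0 := by
    by_contra hcon
    push_neg at hcon
    exact hm (by rw [hcon.1, hcon.2])
  rcases this with h | h
  · nlinarith [sq_nonneg m1, sq_nonneg m2, pow_pos (abs_pos.mpr h) 2, sq_abs m1]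
  · nlinarith [sq_nonneg m1, sq_nonneg m2, pow_pos (abs_pos.mpr h) 2, sq_abs m2]

lemma exists_phiR_lt_one (hprob : ∑' z : ℤ × ℤ, μ z = 1) (h1 : H1 μ) (h3 : H3 μ) :
    ∃ x : ℝ × ℝ, phiR μ x < 1 := by
  obtain ⟨d, hd⟩ := Gdir_zero_mean h1
  obtain ⟨t, -, -, ht⟩ := descend hprob h3 0 d (le_of_eq (phiR_zero hprob)) hd
  exact ⟨0 + t • d, ht⟩

lemma exists_good_b (hprob : ∑' z : ℤ × ℤ, μ z = 1) (h1 : H1 μ) (h3 : H3 μ)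
    (aOf : ℝ × ℝ → ℝ × ℝ) (haOf : IsDirMap μ aOf) :
    ∃ b : ℝ × ℝ, jumpGF μ b < 1 ∧ (aOf (1, 0)).2 < b.2 := by
  set a := aOf ((1 : ℝ), (0 : ℝ)) with ha
  have hq : ((1 : ℝ), (0 : ℝ)) ≠ (0 : ℝ × ℝ) := by
    simp [Prod.ext_iff]
  obtain ⟨hφa, hmax⟩ := haOf (1, 0) hq
  have hphia : phiR μ a = 1 := by
    have := hφa
    rw [jumpGF_eq_ofReal hprob h3] at this
    have h2 := congrArg ENNReal.toReal this
    rwa [ENNReal.toReal_ofReal (phiR_nonneg a), ENNReal.toReal_one] at h2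
  have hlt1 : ∀ c : ℝ × ℝ, phiR μ c < 1 → c.1 < a.1 := by
    intro c hc
    have hne : c ≠ a := fun h => by rw [h, hphia] at hc; exact lt_irrefl _ hc
    have hle : jumpGF μ c ≤ 1 := by
      rw [jumpGF_eq_ofReal hprob h3]
      exact (ENNReal.ofReal_lt_one.mpr hc).le
    have := hmax c hle hne
    simpa [dot] using this
  have hb_of_descend : ∀ d : ℝ × ℝ, 0 < d.2 → Gdir μ a d < 0 →
      ∃ b : ℝ × ℝ, jumpGF μ b < 1 ∧ a.2 < b.2 := by
    intro d hd2 hG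
    obtain ⟨t, ht0, -, ht⟩ := descend hprob h3 a d hphia.le hG
    refine ⟨a + t • d, ?_, ?_⟩
    · rw [jumpGF_eq_ofReal hprob h3]
      exact ENNReal.ofReal_lt_one.mpr ht
    · have : (a + t • d).2 = a.2 + t * d.2 := by simp [Prod.snd_add]
      rw [this]
      nlinarith
  have hcontra_fst : ∀ d : ℝ × ℝ, 0 < d.1 → ¬ (Gdir μ a d < 0) := by
    intro d hd1 hG
    obtain ⟨t, ht0, -, ht⟩ := descend hprob h3 a d hphia.le hG
    have hlt := hlt1 _ ht
    have : (a + t • d).1 = a.1 + t * d.1 := by simp [Prod.fst_add]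
    rw [this] at hlt
    nlinarith
  set G1 := Gdir μ a (1, 0) with hG1def
  set G2 := Gdir μ a (0, 1) with hG2def
  have hG1 : 0 ≤ G1 := by
    by_contra h
    push_neg at h
    exact hcontra_fst (1, 0) one_pos h
  have hdec : ∀ d : ℝ × ℝ, Gdir μ a d = d.1 * G1 + d.2 * G2 :=
    fun d => Gdir_decomp hprob h3 a d
  rcases lt_trichotomy G2 0 with h2 | h2 | h2
  · refine hb_of_descend (0, 1) one_pos ?_
    rw [hdec]; simpa using h2
  · rcases eq_or_lt_of_le hG1 with h1' | h1'
    · -- G1 = 0, G2 = 0 : contradiction with existence of phiR < 1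
      exfalso
      obtain ⟨x, hx⟩ := exists_phiR_lt_one hprob h1 h3
      have hlow := phiR_lower hprob h3 a (x - a)
      rw [add_sub_cancel, hphia, hdec, ← h1', h2] at hlow
      simp at hlow
      linarith
    · refine hb_of_descend (-1, 1) one_pos ?_
      rw [hdec, h2]; simp; linarith
  · rcases eq_or_lt_of_le hG1 with h1' | h1'
    · exfalso
      refine hcontra_fst (1, -1) one_pos ?_
      rw [hdec, ← h1']; simp; linarith
    · refine hb_of_descend (-1, G1 / (2 * G2)) (by positivity) ?_
      rw [hdec]
      simp only
      have : (-1 : ℝ) * G1 + G1 / (2 * G2) * G2 = -G1 / 2 := by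
        field_simp
        ring
      rw [this]
      linarith


/-- exponential weight -/
noncomputable def W (b : ℝ × ℝ) (v : ℤ × ℤ) : ℝ≥0∞ :=
  ENNReal.ofReal (Real.exp (dot b (toR v)))

lemma W_add (b : ℝ × ℝ) (v u : ℤ × ℤ) : W b (v + u) = W b v * W b u := by
  rw [W, W, W, ← ENNReal.ofReal_mul (Real.exp_nonneg _), ← Real.exp_add, dot_toR_add]

lemma W_ne_top (b : ℝ × ℝ) (v : ℤ × ℤ) : W b v ≠ ⊤ := ENNReal.ofReal_ne_top

lemma nstepK_support {A : Set (ℤ × ℤ)} {z : ℤ × ℤ} (hz : z ∈ A) :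
    ∀ n v, nstepK μ A n z v ≠ 0 → v ∈ A := by
  intro n v h
  cases n with
  | zero =>
      by_cases hv : v = z
      · rwa [hv]
      · exact absurd (by simp [nstepK, hv]) h
  | succ n =>
      by_cases hv : v ∈ A
      · exact hv
      · exact absurd (by simp [nstepK, Set.indicator_of_notMem hv]) h

lemma sum_mu_W (b : ℝ × ℝ) (w : ℤ × ℤ) :
    ∑' v : ℤ × ℤ, μ (v - w) * W b v = W b w * jumpGF μ b := by
  rw [← (Equiv.addLeft w).tsum_eq (fun v => μ (v - w) * W b v)]
  have h : ∀ u : ℤ × ℤ, μ ((Equiv.addLeft w) u - w) * W b ((Equiv.addLeft w) u)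
      = W b w * (μ u * W b u) := by
    intro u
    simp only [Equiv.coe_addLeft]
    rw [add_sub_cancel_left, W_add]
    ring
  rw [tsum_congr h, ENNReal.tsum_mul_left]
  rfl

lemma nstepK_weight (A : Set (ℤ × ℤ)) (z : ℤ × ℤ) (b : ℝ × ℝ) :
    ∀ n : ℕ, ∑' v : ℤ × ℤ, nstepK μ A n z v * W b v ≤ (jumpGF μ b) ^ n * W b z := by
  intro n
  induction n with
  | zero =>
      have h0 : ∀ v : ℤ × ℤ, nstepK μ A 0 z v * W b v = if v = z then W b z else 0 := by
        intro v
        simp only [nstepK]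
        split <;> simp_all
      rw [tsum_congr h0, tsum_ite_eq z (fun _ => W b z), pow_zero, one_mul]
  | succ n ih =>
      have h1 : ∀ v : ℤ × ℤ, nstepK μ A (n+1) z v * W b v
          ≤ (∑' w : ℤ × ℤ, nstepK μ A n z w * μ (v - w)) * W b v := by
        intro v
        exact mul_le_mul_left (Set.indicator_le_self A _ v) _
      calc ∑' v : ℤ × ℤ, nstepK μ A (n+1) z v * W b v
          ≤ ∑' v : ℤ × ℤ, (∑' w : ℤ × ℤ, nstepK μ A n z w * μ (v - w)) * W b v :=
            ENNReal.tsum_le_tsum h1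
        _ = ∑' v : ℤ × ℤ, ∑' w : ℤ × ℤ, nstepK μ A n z w * (μ (v - w) * W b v) := by
            refine tsum_congr fun v => ?_
            rw [← ENNReal.tsum_mul_right]
            exact tsum_congr fun w => mul_assoc _ _ _
        _ = ∑' w : ℤ × ℤ, ∑' v : ℤ × ℤ, nstepK μ A n z w * (μ (v - w) * W b v) :=
            ENNReal.tsum_comm
        _ = ∑' w : ℤ × ℤ, nstepK μ A n z w * (W b w * jumpGF μ b) := by
            refine tsum_congr fun w => ?_
            rw [ENNReal.tsum_mul_left, sum_mu_W]
        _ = jumpGF μ b * ∑' w : ℤ × ℤ, nstepK μ A n z w * W b w := by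
            rw [← ENNReal.tsum_mul_left]
            exact tsum_congr fun w => by ring
        _ ≤ jumpGF μ b * ((jumpGF μ b) ^ n * W b z) := mul_le_mul_right ih _
        _ = (jumpGF μ b) ^ (n+1) * W b z := by rw [pow_succ]; ring

/-- the boundary integral `D` -/
noncomputable def DD (μ : ℤ × ℤ → ℝ≥0∞) (c : ℝ × ℝ) : ℝ≥0∞ :=
  ∑' u : ℤ × ℤ, μ u * ENNReal.ofReal (|(u.2 : ℝ)| * Real.exp (dot c (toR u)))

lemma DD_lt_top (h3 : ∀ a : ℝ × ℝ, jumpGF μ a < ⊤) (c : ℝ × ℝ) : DD μ c < ⊤ := by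
  have hb : ∀ u : ℤ × ℤ, μ u * ENNReal.ofReal (|(u.2 : ℝ)| * Real.exp (dot c (toR u)))
      ≤ μ u * ENNReal.ofReal (Real.exp (dot (c.1, c.2 + 1) (toR u)))
        + μ u * ENNReal.ofReal (Real.exp (dot (c.1, c.2 - 1) (toR u))) := by
    intro u
    rw [← mul_add, ← ENNReal.ofReal_add (Real.exp_nonneg _) (Real.exp_nonneg _)]
    refine mul_le_mul_right (ENNReal.ofReal_le_ofReal ?_) _
    have h1 : dot (c.1, c.2 + 1) (toR u) = dot c (toR u) + (u.2 : ℝ) := by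
      simp [dot, toR]; ring
    have h2 : dot (c.1, c.2 - 1) (toR u) = dot c (toR u) + (-(u.2 : ℝ)) := by
      simp [dot, toR]; ring
    rw [h1, h2, Real.exp_add, Real.exp_add]
    calc |(u.2:ℝ)| * Real.exp (dot c (toR u))
        ≤ (Real.exp (u.2:ℝ) + Real.exp (-(u.2:ℝ))) * Real.exp (dot c (toR u)) :=
          mul_le_mul_of_nonneg_right (abs_le_exps _) (Real.exp_nonneg _)
      _ = Real.exp (dot c (toR u)) * Real.exp (u.2:ℝ)
          + Real.exp (dot c (toR u)) * Real.exp (-(u.2:ℝ)) := by ring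
  calc DD μ c ≤ ∑' u : ℤ × ℤ, (μ u * ENNReal.ofReal (Real.exp (dot (c.1, c.2 + 1) (toR u)))
        + μ u * ENNReal.ofReal (Real.exp (dot (c.1, c.2 - 1) (toR u)))) :=
        ENNReal.tsum_le_tsum hb
    _ = jumpGF μ (c.1, c.2 + 1) + jumpGF μ (c.1, c.2 - 1) := ENNReal.tsum_add
    _ < ⊤ := ENNReal.add_lt_top.mpr ⟨h3 _, h3 _⟩

lemma Bv_bound (a : ℝ × ℝ) (θ : ℝ) (hθ : 0 ≤ θ) (v : ℤ × ℤ)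
    (hv1 : 1 ≤ v.1) (hv2 : 1 ≤ v.2) :
    (∑' w : ℤ × ℤ, if w.1 ≤ 0 ∧ 0 < w.2 then
        μ (w - v) * ENNReal.ofReal (|(w.2 : ℝ)| * Real.exp (dot a (toR w))) else 0)
      ≤ ENNReal.ofReal (Real.exp (dot a (toR v) - θ * (v.1 : ℝ)))
        * (ENNReal.ofReal (v.2 : ℝ) * jumpGF μ (a.1 - θ, a.2) + DD μ (a.1 - θ, a.2)) := by
  set c : ℝ × ℝ := (a.1 - θ, a.2) with hc
  set P : ℝ≥0∞ := ENNReal.ofReal (Real.exp (dot a (toR v) - θ * (v.1 : ℝ))) with hP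
  rw [← (Equiv.addLeft v).tsum_eq]
  have hterm : ∀ u : ℤ × ℤ,
      (if ((Equiv.addLeft v) u).1 ≤ 0 ∧ 0 < ((Equiv.addLeft v) u).2 then
        μ ((Equiv.addLeft v) u - v)
          * ENNReal.ofReal (|(((Equiv.addLeft v) u).2 : ℝ)|
            * Real.exp (dot a (toR ((Equiv.addLeft v) u)))) else 0)
      ≤ P * (ENNReal.ofReal (v.2 : ℝ) * (μ u * ENNReal.ofReal (Real.exp (dot c (toR u))))
          + μ u * ENNReal.ofReal (|(u.2 : ℝ)| * Real.exp (dot c (toR u)))) := by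
    intro u
    simp only [Equiv.coe_addLeft, add_sub_cancel_left]
    split
    case isFalse => exact zero_le
    case isTrue hcond =>
      obtain ⟨hc1, hc2⟩ := hcond
      -- real inequality
      have hdotc : dot c (toR u) = dot a (toR u) - θ * (u.1 : ℝ) := by
        simp [hc, dot, toR]; ring
      have hdotsum : dot a (toR (v + u)) = dot a (toR v) + dot a (toR u) := dot_toR_add ..
      have hneg : ((v + u).1 : ℝ) ≤ 0 := by
        have : ((v + u).1 : ℤ) ≤ 0 := hc1
        exact_mod_cast this
      have hv1' : ((v:ℤ×ℤ).1 : ℝ) + ((u:ℤ×ℤ).1 : ℝ) ≤ 0 := by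
        have : ((v + u).1 : ℝ) = (v.1 : ℝ) + (u.1 : ℝ) := by push_cast [Prod.fst_add]; ring
        linarith [hneg, this.symm.le, this.le]
      have hexp : Real.exp (dot a (toR (v + u)))
          ≤ Real.exp (dot a (toR v) - θ * (v.1 : ℝ)) * Real.exp (dot c (toR u)) := by
        rw [← Real.exp_add, hdotsum, hdotc]
        refine Real.exp_le_exp.mpr ?_
        nlinarith [mul_nonneg hθ (neg_nonneg.mpr hv1')]
      have habs : |(((v + u).2 : ℤ) : ℝ)| ≤ (v.2 : ℝ) + |(u.2 : ℝ)| := by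
        have hcast : (((v + u).2 : ℤ) : ℝ) = (v.2 : ℝ) + (u.2 : ℝ) := by
          push_cast [Prod.snd_add]; ring
        rw [hcast]
        have hv2' : (0:ℝ) ≤ (v.2 : ℝ) := by exact_mod_cast (le_trans zero_le_one hv2)
        calc |(v.2 : ℝ) + (u.2 : ℝ)| ≤ |(v.2 : ℝ)| + |(u.2 : ℝ)| := abs_add_le _ _
          _ = (v.2 : ℝ) + |(u.2 : ℝ)| := by rw [abs_of_nonneg hv2']
      have hreal : |(((v+u).2 : ℤ) : ℝ)| * Real.exp (dot a (toR (v + u)))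
          ≤ Real.exp (dot a (toR v) - θ * (v.1 : ℝ))
            * ((v.2 : ℝ) * Real.exp (dot c (toR u)) + |(u.2 : ℝ)| * Real.exp (dot c (toR u))) := by
        have h1 : |(((v+u).2 : ℤ) : ℝ)| * Real.exp (dot a (toR (v + u)))
            ≤ ((v.2 : ℝ) + |(u.2 : ℝ)|)
              * (Real.exp (dot a (toR v) - θ * (v.1 : ℝ)) * Real.exp (dot c (toR u))) := by
          refine mul_le_mul habs hexp (Real.exp_nonneg _) ?_
          positivity
        calc |(((v+u).2 : ℤ) : ℝ)| * Real.exp (dot a (toR (v + u)))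
            ≤ ((v.2 : ℝ) + |(u.2 : ℝ)|)
              * (Real.exp (dot a (toR v) - θ * (v.1 : ℝ)) * Real.exp (dot c (toR u))) := h1
          _ = Real.exp (dot a (toR v) - θ * (v.1 : ℝ))
            * ((v.2 : ℝ) * Real.exp (dot c (toR u)) + |(u.2 : ℝ)| * Real.exp (dot c (toR u))) := by
              ring
      calc μ u * ENNReal.ofReal (|(((v+u).2 : ℤ) : ℝ)| * Real.exp (dot a (toR (v + u))))
          ≤ μ u * ENNReal.ofReal (Real.exp (dot a (toR v) - θ * (v.1 : ℝ))
            * ((v.2 : ℝ) * Real.exp (dot c (toR u)) + |(u.2 : ℝ)| * Real.exp (dot c (toR u)))) :=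
            mul_le_mul_right (ENNReal.ofReal_le_ofReal hreal) _
        _ = P * (ENNReal.ofReal (v.2 : ℝ) * (μ u * ENNReal.ofReal (Real.exp (dot c (toR u))))
            + μ u * ENNReal.ofReal (|(u.2 : ℝ)| * Real.exp (dot c (toR u)))) := by
            rw [ENNReal.ofReal_mul (Real.exp_nonneg _),
              ENNReal.ofReal_add (by positivity) (by positivity),
              ENNReal.ofReal_mul (by positivity : (0:ℝ) ≤ (v.2 : ℝ)),
              ENNReal.ofReal_mul (abs_nonneg _)]
            ring
  calc (∑' u : ℤ × ℤ, if ((Equiv.addLeft v) u).1 ≤ 0 ∧ 0 < ((Equiv.addLeft v) u).2 then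
        μ ((Equiv.addLeft v) u - v)
          * ENNReal.ofReal (|(((Equiv.addLeft v) u).2 : ℝ)|
            * Real.exp (dot a (toR ((Equiv.addLeft v) u)))) else 0)
      ≤ ∑' u : ℤ × ℤ,
        P * (ENNReal.ofReal (v.2 : ℝ) * (μ u * ENNReal.ofReal (Real.exp (dot c (toR u))))
          + μ u * ENNReal.ofReal (|(u.2 : ℝ)| * Real.exp (dot c (toR u)))) :=
        ENNReal.tsum_le_tsum hterm
    _ = P * (ENNReal.ofReal (v.2 : ℝ) * jumpGF μ c + DD μ c) := by
        rw [ENNReal.tsum_mul_left]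
        congr 1
        rw [ENNReal.tsum_add, ENNReal.tsum_mul_left]
        rfl


lemma expand_Eexit1 (z : ℤ × ℤ) (f : ℤ × ℤ → ℝ≥0∞) :
    Eexit1 μ z f = ∑' n : ℕ, ∑' v : ℤ × ℤ, nstepK μ quadrant n z v *
      (∑' w : ℤ × ℤ, if w.1 ≤ 0 ∧ 0 < w.2 then μ (w - v) * f w else 0) := by
  rw [Eexit1]
  have hterm : ∀ w : ℤ × ℤ, (if w.1 ≤ 0 ∧ 0 < w.2 then exitK μ quadrant z w * f w else 0)
      = ∑' n : ℕ, ∑' v : ℤ × ℤ, nstepK μ quadrant n z v *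
          (if w.1 ≤ 0 ∧ 0 < w.2 then μ (w - v) * f w else 0) := by
    intro w
    by_cases h : w.1 ≤ 0 ∧ 0 < w.2
    · rw [if_pos h]
      have hw : w ∈ quadrantᶜ := by
        intro hw
        exact absurd hw.1 (not_lt.mpr h.1)
      rw [exitK, Set.indicator_of_mem hw]
      rw [← ENNReal.tsum_mul_right]
      refine tsum_congr fun n => ?_
      rw [← ENNReal.tsum_mul_right]
      refine tsum_congr fun v => ?_
      rw [if_pos h, mul_assoc]
    · rw [if_neg h]
      simp only [if_neg h, mul_zero, tsum_zero]
  rw [tsum_congr hterm, ENNReal.tsum_comm]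
  refine tsum_congr fun n => ?_
  rw [ENNReal.tsum_comm]
  refine tsum_congr fun v => ?_
  rw [ENNReal.tsum_mul_left]

lemma quadrant_coords {v : ℤ × ℤ} (hv : v ∈ quadrant) : 1 ≤ v.1 ∧ 1 ≤ v.2 := ⟨hv.1, hv.2⟩


end Aux

/-- **Corollary 3.1.**  Under (H1) and (H3), for `a = a(1,0)`, the function
`z ↦ E_z(|S₂(τ)| exp(a·S(τ)); τ = τ₁ < τ₂)` is finite on `ℕ*×ℕ*`. -/
theorem finiteness_S2_exit_left
    (μ : ℤ × ℤ → ℝ≥0∞) (hprob : ∑' z : ℤ × ℤ, μ z = 1)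
    (h1 : H1 μ) (h3 : H3 μ)
    (aOf : ℝ × ℝ → ℝ × ℝ) (haOf : IsDirMap μ aOf) :
    ∀ z ∈ quadrant,
      Eexit1 μ z (fun w =>
          ENNReal.ofReal
            (|(w.2 : ℝ)| * Real.exp (dot (aOf ((1 : ℝ), (0 : ℝ))) (toR w)))) < ⊤ := by
  intro z hz
  obtain ⟨b, hb1, hb2⟩ := exists_good_b hprob h1 h3 aOf haOf
  set a := aOf ((1 : ℝ), (0 : ℝ)) with ha
  set θ : ℝ := max (a.1 - b.1) 0 with hθdef
  have hθ : 0 ≤ θ := le_max_right _ _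
  set c : ℝ × ℝ := (a.1 - θ, a.2) with hc
  set C := jumpGF μ c with hCdef
  set D := DD μ c with hDdef
  have hCt : C ≠ ⊤ := (h3 c).ne
  have hDt : D ≠ ⊤ := (DD_lt_top h3 c).ne
  set ε : ℝ := b.2 - a.2 with hεdef
  have hε0 : 0 < ε := sub_pos.mpr hb2
  set M := ENNReal.ofReal (1/ε) * C + D with hMdef
  have hMt : M ≠ ⊤ :=
    ENNReal.add_ne_top.mpr ⟨ENNReal.mul_ne_top ENNReal.ofReal_ne_top hCt, hDt⟩
  have hpoint : ∀ v : ℤ × ℤ, v ∈ quadrant →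
      ENNReal.ofReal (Real.exp (dot a (toR v) - θ * (v.1 : ℝ)))
        * (ENNReal.ofReal (v.2 : ℝ) * C + D) ≤ W b v * M := by
    intro v hv
    have hv1R : (1:ℝ) ≤ (v.1 : ℝ) := by exact_mod_cast hv.1
    have hv2R : (1:ℝ) ≤ (v.2 : ℝ) := by exact_mod_cast hv.2
    have hexp1 : dot a (toR v) - θ * (v.1:ℝ) ≤ dot b (toR v) - ε * (v.2:ℝ) := by
      have h1 : a.1 - b.1 ≤ θ := le_max_left _ _
      have hkey : dot b (toR v) - ε * (v.2:ℝ) - (dot a (toR v) - θ * (v.1:ℝ))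
          = (θ - (a.1 - b.1)) * (v.1:ℝ) := by
        simp only [dot, toR, hεdef]; ring
      nlinarith [mul_nonneg (sub_nonneg.mpr h1) (le_trans zero_le_one hv1R)]
    have hi : Real.exp (dot a (toR v) - θ * (v.1:ℝ)) * (v.2:ℝ)
        ≤ Real.exp (dot b (toR v)) * (1/ε) := by
      calc Real.exp (dot a (toR v) - θ * (v.1:ℝ)) * (v.2:ℝ)
          ≤ Real.exp (dot b (toR v) - ε * (v.2:ℝ)) * (v.2:ℝ) :=
            mul_le_mul_of_nonneg_right (Real.exp_le_exp.mpr hexp1) (by linarith)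
        _ = Real.exp (dot b (toR v)) * ((v.2:ℝ) * Real.exp (-(ε * (v.2:ℝ)))) := by
            rw [sub_eq_add_neg, Real.exp_add]; ring
        _ ≤ Real.exp (dot b (toR v)) * (1/ε) :=
            mul_le_mul_of_nonneg_left (mul_exp_neg_le ε _ hε0 (by linarith))
              (Real.exp_nonneg _)
    have hii : Real.exp (dot a (toR v) - θ * (v.1:ℝ)) ≤ Real.exp (dot b (toR v)) := by
      refine Real.exp_le_exp.mpr ?_
      nlinarith [mul_pos hε0 (lt_of_lt_of_le one_pos hv2R)]
    have e1 : ENNReal.ofReal (Real.exp (dot a (toR v) - θ * (v.1:ℝ))) * ENNReal.ofReal (v.2:ℝ)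
        ≤ W b v * ENNReal.ofReal (1/ε) := by
      rw [← ENNReal.ofReal_mul (Real.exp_nonneg _), W,
        ← ENNReal.ofReal_mul (Real.exp_nonneg _)]
      exact ENNReal.ofReal_le_ofReal hi
    have e2 : ENNReal.ofReal (Real.exp (dot a (toR v) - θ * (v.1:ℝ))) ≤ W b v :=
      ENNReal.ofReal_le_ofReal hii
    calc ENNReal.ofReal (Real.exp (dot a (toR v) - θ * (v.1:ℝ)))
          * (ENNReal.ofReal (v.2 : ℝ) * C + D)
        = (ENNReal.ofReal (Real.exp (dot a (toR v) - θ * (v.1:ℝ))) * ENNReal.ofReal (v.2:ℝ)) * C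
          + ENNReal.ofReal (Real.exp (dot a (toR v) - θ * (v.1:ℝ))) * D := by ring
      _ ≤ (W b v * ENNReal.ofReal (1/ε)) * C + W b v * D :=
          add_le_add (mul_le_mul_left e1 C) (mul_le_mul_left e2 D)
      _ = W b v * M := by rw [hMdef]; ring
  rw [expand_Eexit1]
  have hstep : ∀ (n : ℕ) (v : ℤ × ℤ), nstepK μ quadrant n z v *
      (∑' w : ℤ × ℤ, if w.1 ≤ 0 ∧ 0 < w.2 then μ (w - v) *
        ENNReal.ofReal (|(w.2 : ℝ)| * Real.exp (dot a (toR w))) else 0)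
      ≤ M * (nstepK μ quadrant n z v * W b v) := by
    intro n v
    by_cases h0 : nstepK μ quadrant n z v = 0
    · rw [h0]; simp
    · have hv := nstepK_support hz n v h0
      have hbd := (Bv_bound a θ hθ v hv.1 hv.2).trans (hpoint v hv)
      calc nstepK μ quadrant n z v * _ ≤ nstepK μ quadrant n z v * (W b v * M) :=
            mul_le_mul_right hbd _
        _ = M * (nstepK μ quadrant n z v * W b v) := by ring
  calc (∑' n : ℕ, ∑' v : ℤ × ℤ, nstepK μ quadrant n z v *
        (∑' w : ℤ × ℤ, if w.1 ≤ 0 ∧ 0 < w.2 then μ (w - v) *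
          ENNReal.ofReal (|(w.2 : ℝ)| * Real.exp (dot a (toR w))) else 0))
      ≤ ∑' n : ℕ, ∑' v : ℤ × ℤ, M * (nstepK μ quadrant n z v * W b v) :=
        ENNReal.tsum_le_tsum fun n => ENNReal.tsum_le_tsum (hstep n)
    _ = M * ∑' n : ℕ, ∑' v : ℤ × ℤ, nstepK μ quadrant n z v * W b v := by
        rw [← ENNReal.tsum_mul_left]
        exact tsum_congr fun n => ENNReal.tsum_mul_left
    _ ≤ M * ∑' n : ℕ, (jumpGF μ b) ^ n * W b z :=
        mul_le_mul_right (ENNReal.tsum_le_tsum (nstepK_weight quadrant z b)) M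
    _ = M * ((∑' n : ℕ, (jumpGF μ b) ^ n) * W b z) := by rw [ENNReal.tsum_mul_right]
    _ = M * ((1 - jumpGF μ b)⁻¹ * W b z) := by rw [ENNReal.tsum_geometric]
    _ < ⊤ := by
        refine ENNReal.mul_lt_top hMt.lt_top ?_
        refine ENNReal.mul_lt_top ?_ (ENNReal.ofReal_lt_top)
        rw [ENNReal.inv_lt_top]
        exact tsub_pos_of_lt hb1



end KRWQ
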